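/- arXiv:1805.08672 — 3 statements merged into one kernel-verified Lean document; each statement's English description precedes it below -/
import Mathlib

section
/- HSIC(u, v), defined as the squared Hilbert-Schmidt norm of the cross-covariance operator C_{uv}, satisfies HSIC(u, v) = E[k(u,u') l(v,v')] + E[k(u,u')] E[l(v,v')] − 2 E_{(u,v)}[ E_{u'}[k(u,u')] E_{v'}[l(v,v')] ], where (u,v), (u',v'), (u'',v'') are iid copies of the joint random variable. -/
open MeasureTheory

lemma inner_integral_integral {T : Type*} [NormedAddCommGroup T] [InnerProductSpace ℝ T]
    [CompleteSpace T] {γ δ : Type*} [MeasurableSpace γ] [MeasurableSpace δ]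
    (μ : Measure γ) (ν : Measure δ) (f : γ → T) (g : δ → T)
    (hf : Integrable f μ) (hg : Integrable g ν) :
    (inner ℝ (∫ p, f p ∂μ) (∫ q, g q ∂ν) : ℝ) = ∫ p, ∫ q, (inner ℝ (f p) (g q) : ℝ) ∂ν ∂μ := by
  rw [real_inner_comm, ← integral_inner hf]
  refine integral_congr_ae (Filter.Eventually.of_forall fun p => ?_)
  show (inner ℝ (∫ q, g q ∂ν) (f p) : ℝ) = _
  rw [real_inner_comm, ← integral_inner hg]

/-- HSIC expectation formula.  The squared Hilbert–Schmidt norm of the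
cross-covariance operator equals the squared RKHS distance, in the tensor-product RKHS,
between the embedding of the joint law and the embedding of the product of the marginals;
here the tensor-product RKHS is modelled by a Hilbert space `T` with feature map
`Φ : α × β → T` satisfying `⟪Φ(x,y), Φ(x',y')⟫ = k x x' · l y y'`.  With `(u,v), (u',v')`
iid copies of the joint variable,
`HSIC(u,v) = E[k(u,u') l(v,v')] + E[k(u,u')]·E[l(v,v')] − 2 E_{(u,v)}[E_{u'}[k(u,u')]·E_{v'}[l(v,v')]]`. -/
theorem hsic_expectation_formula
    {Ω α β : Type*} [MeasurableSpace Ω] [MeasurableSpace α] [MeasurableSpace β]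
    (P : Measure Ω) [IsProbabilityMeasure P]
    {T : Type*} [NormedAddCommGroup T] [InnerProductSpace ℝ T] [CompleteSpace T]
    (k : α → α → ℝ) (l : β → β → ℝ)
    (Φ : α × β → T) (hΦm : StronglyMeasurable Φ) (hΦb : ∃ Cb : ℝ, ∀ p, ‖Φ p‖ ≤ Cb)
    (hΦ : ∀ x x' y y', (inner ℝ (Φ (x, y)) (Φ (x', y')) : ℝ) = k x x' * l y y')
    (u : Ω → α) (v : Ω → β) (hu : Measurable u) (hv : Measurable v) :
    ‖(∫ p, Φ p ∂(P.map fun ω => (u ω, v ω)))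
        - ∫ p, Φ p ∂((P.map u).prod (P.map v))‖ ^ 2
      = (∫ p, ∫ q, k p.1 q.1 * l p.2 q.2
            ∂(P.map fun ω => (u ω, v ω)) ∂(P.map fun ω => (u ω, v ω)))
        + (∫ x, ∫ x', k x x' ∂(P.map u) ∂(P.map u))
            * (∫ y, ∫ y', l y y' ∂(P.map v) ∂(P.map v))
        - 2 * ∫ p, (∫ x', k p.1 x' ∂(P.map u)) * (∫ y', l p.2 y' ∂(P.map v))
            ∂(P.map fun ω => (u ω, v ω)) := by
  obtain ⟨Cb, hCb⟩ := hΦb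
  set μ₁ : Measure (α × β) := P.map fun ω => (u ω, v ω) with hμ₁
  set μ₂ : Measure (α × β) := (P.map u).prod (P.map v) with hμ₂
  haveI : IsProbabilityMeasure (P.map u) := Measure.isProbabilityMeasure_map hu.aemeasurable
  haveI : IsProbabilityMeasure (P.map v) := Measure.isProbabilityMeasure_map hv.aemeasurable
  haveI : IsProbabilityMeasure μ₁ := Measure.isProbabilityMeasure_map (hu.prodMk hv).aemeasurable
  haveI : IsProbabilityMeasure μ₂ := by rw [hμ₂]; infer_instance
  have hint : ∀ (μ : Measure (α × β)) [IsProbabilityMeasure μ], Integrable Φ μ := by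
    intro μ _
    exact ⟨hΦm.aestronglyMeasurable,
      HasFiniteIntegral.of_bounded (C := Cb) (Filter.Eventually.of_forall hCb)⟩
  have h1 := hint μ₁
  have h2 := hint μ₂
  have hprod : ∀ p : α × β, (inner ℝ (Φ p) (∫ q, Φ q ∂μ₂) : ℝ)
      = (∫ x', k p.1 x' ∂(P.map u)) * (∫ y', l p.2 y' ∂(P.map v)) := by
    intro p
    rw [← integral_inner h2]
    have : ∀ q : α × β, (inner ℝ (Φ p) (Φ q) : ℝ) = k p.1 q.1 * l p.2 q.2 := by
      intro q; simpa using hΦ p.1 q.1 p.2 q.2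
    simp_rw [this]
    exact integral_prod_mul (f := fun x' => k p.1 x') (g := fun y' => l p.2 y')
  have hinner : ∀ q : α × β, ∀ p : α × β, (inner ℝ (Φ p) (Φ q) : ℝ) = k p.1 q.1 * l p.2 q.2 := by
    intro q p; simpa using hΦ p.1 q.1 p.2 q.2
  have h11 : (inner ℝ (∫ p, Φ p ∂μ₁) (∫ p, Φ p ∂μ₁) : ℝ)
      = ∫ p, ∫ q, k p.1 q.1 * l p.2 q.2 ∂μ₁ ∂μ₁ := by
    rw [inner_integral_integral μ₁ μ₁ Φ Φ h1 h1]
    refine integral_congr_ae (Filter.Eventually.of_forall fun p => ?_)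
    exact integral_congr_ae (Filter.Eventually.of_forall fun q => hinner q p)
  have h22 : (inner ℝ (∫ p, Φ p ∂μ₂) (∫ p, Φ p ∂μ₂) : ℝ)
      = (∫ x, ∫ x', k x x' ∂(P.map u) ∂(P.map u))
          * (∫ y, ∫ y', l y y' ∂(P.map v) ∂(P.map v)) := by
    rw [← integral_inner h2]
    have he : ∀ q : α × β, (inner ℝ (∫ p, Φ p ∂μ₂) (Φ q) : ℝ)
        = (∫ x', k q.1 x' ∂(P.map u)) * (∫ y', l q.2 y' ∂(P.map v)) := fun q => by
      rw [real_inner_comm]; exact hprod q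
    rw [integral_congr_ae (Filter.Eventually.of_forall he)]
    exact integral_prod_mul (f := fun x => ∫ x', k x x' ∂(P.map u))
      (g := fun y => ∫ y', l y y' ∂(P.map v))
  have h12 : (inner ℝ (∫ p, Φ p ∂μ₁) (∫ p, Φ p ∂μ₂) : ℝ)
      = ∫ p, (∫ x', k p.1 x' ∂(P.map u)) * (∫ y', l p.2 y' ∂(P.map v)) ∂μ₁ := by
    rw [real_inner_comm, ← integral_inner h1]
    refine integral_congr_ae (Filter.Eventually.of_forall fun p => ?_)
    show (inner ℝ (∫ q, Φ q ∂μ₂) (Φ p) : ℝ) = _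
    rw [real_inner_comm]; exact hprod p
  rw [← h11, ← h22, ← h12, @norm_sub_sq_real]
  simp only [real_inner_self_eq_norm_sq]
  ring
end

section
/- HSIC(u, v) = 0 whenever u and v are independent, and conversely if both kernels k and l are characteristic (mean embeddings injective) and the product kernel k⊗l is characteristic on the product space, then HSIC(u, v) = 0 implies u and v are independent. -/
open MeasureTheory ProbabilityTheory

/-- `HSIC(u,v) = ‖μ_{P_{uv}} − μ_{P_u ⊗ P_v}‖²` in the tensor-product RKHS
(modelled by a Hilbert space `T` with feature map `Φ` for the product kernel `k ⊗ l`)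
vanishes whenever `u` and `v` are independent; conversely, if the product kernel `k ⊗ l`
is characteristic on the product space (its mean embedding is injective on Borel
probability measures), then `HSIC(u,v) = 0` implies that `u` and `v` are independent. -/
theorem hsic_zero_iff_indep
    {Ω α β : Type*} [MeasurableSpace Ω] [MeasurableSpace α] [MeasurableSpace β]
    (P : Measure Ω) [IsProbabilityMeasure P]
    {T : Type*} [NormedAddCommGroup T] [InnerProductSpace ℝ T] [CompleteSpace T]
    (k : α → α → ℝ) (l : β → β → ℝ)
    (Φ : α × β → T) (hΦm : StronglyMeasurable Φ) (hΦb : ∃ Cb : ℝ, ∀ p, ‖Φ p‖ ≤ Cb)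
    (hΦ : ∀ x x' y y', (inner ℝ (Φ (x, y)) (Φ (x', y')) : ℝ) = k x x' * l y y')
    (u : Ω → α) (v : Ω → β) (hu : Measurable u) (hv : Measurable v) :
    (IndepFun u v P →
      ‖(∫ p, Φ p ∂(P.map fun ω => (u ω, v ω)))
          - ∫ p, Φ p ∂((P.map u).prod (P.map v))‖ ^ 2 = 0) ∧
    ((∀ (μ ν : Measure (α × β)), IsProbabilityMeasure μ → IsProbabilityMeasure ν →
        (∫ p, Φ p ∂μ) = (∫ p, Φ p ∂ν) → μ = ν) →
      ‖(∫ p, Φ p ∂(P.map fun ω => (u ω, v ω)))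
          - ∫ p, Φ p ∂((P.map u).prod (P.map v))‖ ^ 2 = 0 →
      IndepFun u v P) := by
  have hiff := indepFun_iff_map_prod_eq_prod_map_map (μ := P) hu.aemeasurable hv.aemeasurable
  constructor
  · intro h
    rw [hiff.1 h]
    simp
  · intro hchar h
    have h0 : (∫ p, Φ p ∂(P.map fun ω => (u ω, v ω)))
        = ∫ p, Φ p ∂((P.map u).prod (P.map v)) := by
      have := pow_eq_zero_iff (n := 2) (by norm_num) |>.1 h
      rw [norm_eq_zero, sub_eq_zero] at this
      exact this
    have h1 : IsProbabilityMeasure (P.map fun ω => (u ω, v ω)) :=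
      Measure.isProbabilityMeasure_map (hu.prodMk hv).aemeasurable
    have h2 : IsProbabilityMeasure (P.map u) := Measure.isProbabilityMeasure_map hu.aemeasurable
    have h3 : IsProbabilityMeasure (P.map v) := Measure.isProbabilityMeasure_map hv.aemeasurable
    exact hiff.2 (hchar _ _ h1 (by infer_instance) h0)
end

section
/- The dHSIC population value, defined as the squared RKHS norm ‖μ_{P} − μ_{P^1 ⊗ ··· ⊗ P^d}‖² in the tensor product RKHS of the joint distribution P of (X^1,...,X^d) versus the product of its marginals, is nonnegative, and equals zero if and only if X^1, ..., X^d are mutually independent, provided the canonical tensor-product kernel ⊗_j k^j is characteristic on the product space. -/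
open MeasureTheory

/-- The population dHSIC, defined as the squared RKHS norm
`‖μ_P − μ_{P¹⊗···⊗P^d}‖²` in the tensor-product RKHS (modelled by a Hilbert space `T` with
feature map `Φ` for the canonical tensor-product kernel `⊗_j k^j`) of the joint law `P` of
`(X¹,…,X^d)` versus the product of its marginals, is nonnegative; and it equals zero if
and only if `X¹,…,X^d` are mutually independent (the joint law equals the product of the
marginals), provided the tensor-product kernel is characteristic on the product space. -/
theorem dhsic_nonneg_and_zero_iff_indep
    {d : ℕ} {α : Fin d → Type*} [∀ j, MeasurableSpace (α j)]
    {T : Type*} [NormedAddCommGroup T] [InnerProductSpace ℝ T] [CompleteSpace T]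
    (k : ∀ j, α j → α j → ℝ)
    (Φ : (∀ j, α j) → T) (hΦm : StronglyMeasurable Φ) (hΦb : ∃ Cb : ℝ, ∀ x, ‖Φ x‖ ≤ Cb)
    (hΦ : ∀ x y : ∀ j, α j, (inner ℝ (Φ x) (Φ y) : ℝ) = ∏ j, k j (x j) (y j))
    (P : Measure (∀ j, α j)) [IsProbabilityMeasure P]
    (Pm : ∀ j, Measure (α j)) [∀ j, IsProbabilityMeasure (Pm j)]
    (hPm : ∀ j, Pm j = P.map (fun x => x j)) :
    0 ≤ ‖(∫ x, Φ x ∂P) - ∫ x, Φ x ∂(Measure.pi Pm)‖ ^ 2 ∧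
    ((∀ (μ ν : Measure (∀ j, α j)), IsProbabilityMeasure μ → IsProbabilityMeasure ν →
        (∫ x, Φ x ∂μ) = (∫ x, Φ x ∂ν) → μ = ν) →
      (‖(∫ x, Φ x ∂P) - ∫ x, Φ x ∂(Measure.pi Pm)‖ ^ 2 = 0 ↔ P = Measure.pi Pm)) := by
  refine ⟨sq_nonneg _, fun hchar => ?_⟩
  constructor
  · intro h
    have h0 : (∫ x, Φ x ∂P) = ∫ x, Φ x ∂(Measure.pi Pm) := by
      have := pow_eq_zero_iff (n := 2) (by norm_num) |>.mp h
      have := norm_eq_zero.mp this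
      exact sub_eq_zero.mp this
    exact hchar P (Measure.pi Pm) inferInstance inferInstance h0
  · intro h
    rw [h, sub_self, norm_zero]
    norm_num
end
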